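/- Let Σ be a 3-chromatic signed simple graph (χ(Σ) = 3). Then M(Σ) = 1 if and only if there exists a vertex cover of the positive edge set E⁺ that is stable in Σ. -/

import Mathlib

/-- A signed simple graph: two edge-disjoint simple graphs on the same vertex set,
the positive edges and the negative edges. -/
structure SignedGraph (V : Type*) where
  pos : SimpleGraph V
  neg : SimpleGraph V
  disjoint : ∀ a b : V, ¬ (pos.Adj a b ∧ neg.Adj a b)

/-- The color set of size `n`: `{±1, …, ±k}` if `n = 2k`, and `{0, ±1, …, ±k}` if `n = 2k+1`. -/
noncomputable def signedColorSet (n : ℕ) : Finset ℤ :=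
  if Even n then (Finset.Icc (-((n / 2 : ℕ) : ℤ)) ((n / 2 : ℕ) : ℤ)).erase 0
  else Finset.Icc (-((n / 2 : ℕ) : ℤ)) ((n / 2 : ℕ) : ℤ)

/-- A proper coloration of a signed graph using the color set of size `n`. -/
def IsProperColoration {V : Type*} (S : SignedGraph V) (n : ℕ) (κ : V → ℤ) : Prop :=
  (∀ v, κ v ∈ signedColorSet n) ∧
  (∀ a b, S.pos.Adj a b → κ a ≠ κ b) ∧
  (∀ a b, S.neg.Adj a b → κ a ≠ -κ b)

/-- The chromatic number: the least size of a color set admitting a proper coloration. -/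
noncomputable def sChromaticNumber {V : Type*} (S : SignedGraph V) : ℕ :=
  sInf {n : ℕ | ∃ κ : V → ℤ, IsProperColoration S n κ}

/-- A minimal coloration: a proper coloration using the color set of size `χ(Σ)`. -/
def IsMinimalColoration {V : Type*} (S : SignedGraph V) (κ : V → ℤ) : Prop :=
  IsProperColoration S (sChromaticNumber S) κ

/-- The deficiency of a coloration: the number of unused colors from the color set of size `n`. -/
noncomputable def sDeficiency {V : Type*} [Fintype V] (n : ℕ) (κ : V → ℤ) : ℕ :=
  (signedColorSet n \ Finset.image κ Finset.univ).card

/-- Maximum deficiency over minimal colorations. -/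
noncomputable def maxDef {V : Type*} [Fintype V] (S : SignedGraph V) : ℕ :=
  sSup {d : ℕ | ∃ κ : V → ℤ, IsMinimalColoration S κ ∧ sDeficiency (sChromaticNumber S) κ = d}

/-- Minimum deficiency over minimal colorations. -/
noncomputable def minDef {V : Type*} [Fintype V] (S : SignedGraph V) : ℕ :=
  sInf {d : ℕ | ∃ κ : V → ℤ, IsMinimalColoration S κ ∧ sDeficiency (sChromaticNumber S) κ = d}

/-- A stable cover of the positive edges: a vertex cover of `E⁺` that is stable in `Σ`. -/
def IsStableCover {V : Type*} (S : SignedGraph V) (T : Set V) : Prop :=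
  (∀ a b, S.pos.Adj a b → a ∈ T ∨ b ∈ T) ∧
  (∀ a ∈ T, ∀ b ∈ T, ¬ S.pos.Adj a b ∧ ¬ S.neg.Adj a b)

/-- An edge `ab` has exactly one endpoint in `A`. -/
def crossing {V : Type*} (A : Set V) (a b : V) : Prop := ¬ ((a ∈ A) ↔ (b ∈ A))

/-- Switching a signed graph at a vertex set `A`: the sign of every edge with exactly one
endpoint in `A` is negated. -/
def SignedGraph.switch {V : Type*} (S : SignedGraph V) (A : Set V) : SignedGraph V where
  pos :=
    { Adj := fun a b => (S.pos.Adj a b ∧ ¬ crossing A a b) ∨ (S.neg.Adj a b ∧ crossing A a b)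
      symm := by
        constructor
        intro a b h
        unfold crossing at *
        rcases h with ⟨h1, h2⟩ | ⟨h1, h2⟩
        · exact Or.inl ⟨S.pos.adj_symm h1, by tauto⟩
        · exact Or.inr ⟨S.neg.adj_symm h1, by tauto⟩
      loopless := by
        constructor
        intro a h
        rcases h with ⟨h1, _⟩ | ⟨_, h2⟩
        · exact S.pos.ne_of_adj h1 rfl
        · exact h2 Iff.rfl }
  neg :=
    { Adj := fun a b => (S.neg.Adj a b ∧ ¬ crossing A a b) ∨ (S.pos.Adj a b ∧ crossing A a b)
      symm := by
        constructor
        intro a b h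
        unfold crossing at *
        rcases h with ⟨h1, h2⟩ | ⟨h1, h2⟩
        · exact Or.inl ⟨S.neg.adj_symm h1, by tauto⟩
        · exact Or.inr ⟨S.pos.adj_symm h1, by tauto⟩
      loopless := by
        constructor
        intro a h
        rcases h with ⟨h1, _⟩ | ⟨_, h2⟩
        · exact S.neg.ne_of_adj h1 rfl
        · exact h2 Iff.rfl }
  disjoint := by
    intro a b h
    have := S.disjoint a b
    tauto

/-- General proper coloration with an arbitrary color set `C ⊆ ℤ`. -/
def IsProperWith {V : Type*} (S : SignedGraph V) (C : Set ℤ) (κ : V → ℤ) : Prop :=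
  (∀ v, κ v ∈ C) ∧
  (∀ a b, S.pos.Adj a b → κ a ≠ κ b) ∧
  (∀ a b, S.neg.Adj a b → κ a ≠ -κ b)

open Classical in
/-- The coloration switching equivalent to `κ` via `A`: negate the colors on `A`. -/
noncomputable def switchColor {V : Type*} (A : Set V) (κ : V → ℤ) : V → ℤ :=
  fun v => if v ∈ A then -κ v else κ v

/-- The adjacency of the forcing graph `F(Σ)` for the matching `m`:
a directed edge from `x` to `y` whenever `x ȳ` is a negative edge. -/
def ForcingAdj {V : Type*} (S : SignedGraph V) (m : V → V) (x y : V) : Prop :=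
  S.neg.Adj x (m y)



section Aux

variable {V : Type*}

lemma mem_scs3 (x : ℤ) : x ∈ signedColorSet 3 ↔ x = -1 ∨ x = 0 ∨ x = 1 := by
  rw [signedColorSet, if_neg (by decide : ¬ Even 3)]
  norm_num [Finset.mem_Icc]; omega

lemma mem_scs2 (x : ℤ) : x ∈ signedColorSet 2 ↔ x = -1 ∨ x = 1 := by
  norm_num [signedColorSet, Finset.mem_Icc, Finset.mem_erase]; omega

lemma mem_scs1 (x : ℤ) : x ∈ signedColorSet 1 ↔ x = 0 := by
  rw [signedColorSet, if_neg (by decide : ¬ Even 1)]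
  norm_num [Finset.mem_Icc]

lemma chrom_le (S : SignedGraph V) {n : ℕ} {κ : V → ℤ} (hκ : IsProperColoration S n κ) :
    sChromaticNumber S ≤ n :=
  Nat.sInf_le ⟨κ, hκ⟩

/-- If the values of a proper coloration all lie in another color set, it is proper there too. -/
lemma proper_mono (S : SignedGraph V) {n m : ℕ} {κ : V → ℤ}
    (hκ : IsProperColoration S n κ) (hmem : ∀ v, κ v ∈ signedColorSet m) :
    IsProperColoration S m κ :=
  ⟨hmem, hκ.2.1, hκ.2.2⟩

/-- A 3-chromatic graph has a proper coloration of size 3. -/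
lemma exists_proper3 (S : SignedGraph V) (h : sChromaticNumber S = 3) :
    ∃ κ : V → ℤ, IsProperColoration S 3 κ := by
  have hne : {n : ℕ | ∃ κ : V → ℤ, IsProperColoration S n κ}.Nonempty := by
    by_contra hc
    rw [Set.not_nonempty_iff_eq_empty] at hc
    rw [sChromaticNumber, hc, Nat.sInf_empty] at h
    exact absurd h (by norm_num)
  have := Nat.sInf_mem hne
  rw [show sInf {n : ℕ | ∃ κ : V → ℤ, IsProperColoration S n κ} = sChromaticNumber S from rfl,
    h] at this
  exact this

/-- In a 3-chromatic graph, every proper 3-coloration takes the value 0. -/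
lemma zero_mem (S : SignedGraph V) (h : sChromaticNumber S = 3)
    {κ : V → ℤ} (hκ : IsProperColoration S 3 κ) : ∃ v, κ v = 0 := by
  by_contra hc
  push_neg at hc
  have h2 : IsProperColoration S 2 κ := by
    refine proper_mono S hκ (fun v => ?_)
    have := (mem_scs3 (κ v)).1 (hκ.1 v)
    rw [mem_scs2]
    rcases this with h' | h' | h' <;> [exact Or.inl h'; exact absurd h' (hc v); exact Or.inr h']
  have := chrom_le S h2
  omega

/-- In a 3-chromatic graph, every proper 3-coloration takes a nonzero value. -/
lemma nonzero_mem (S : SignedGraph V) (h : sChromaticNumber S = 3)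
    {κ : V → ℤ} (hκ : IsProperColoration S 3 κ) : ∃ v, κ v ≠ 0 := by
  by_contra hc
  push_neg at hc
  have h1 : IsProperColoration S 1 κ :=
    proper_mono S hκ (fun v => (mem_scs1 (κ v)).2 (hc v))
  have := chrom_le S h1
  omega

/-- In a 3-chromatic graph, every proper 3-coloration has deficiency at most 1. -/
lemma def_le_one [Fintype V] (S : SignedGraph V) (h : sChromaticNumber S = 3)
    {κ : V → ℤ} (hκ : IsProperColoration S 3 κ) : sDeficiency 3 κ ≤ 1 := by
  obtain ⟨v0, hv0⟩ := zero_mem S h hκ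
  rw [sDeficiency, Finset.card_le_one]
  intro a ha b hb
  rw [Finset.mem_sdiff, Finset.mem_image] at ha hb
  push_neg at ha hb
  have ha3 := (mem_scs3 a).1 ha.1
  have hb3 := (mem_scs3 b).1 hb.1
  have ha0 : a ≠ 0 := fun h' => ha.2 v0 (Finset.mem_univ v0) (h' ▸ hv0)
  have hb0 : b ≠ 0 := fun h' => hb.2 v0 (Finset.mem_univ v0) (h' ▸ hv0)
  by_contra hab
  obtain ⟨w, hw⟩ := nonzero_mem S h hκ
  have hw3 := (mem_scs3 (κ w)).1 (hκ.1 w)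
  have hwa := ha.2 w (Finset.mem_univ w)
  have hwb := hb.2 w (Finset.mem_univ w)
  omega

/-- From a proper 3-coloration missing a nonzero color, build a stable cover. -/
lemma cover_of_missing (S : SignedGraph V) {κ : V → ℤ} (hκ : IsProperColoration S 3 κ)
    {s : ℤ} (hs : s = 1 ∨ s = -1) (hmiss : ∀ v, κ v ≠ s) :
    (∀ a b, S.pos.Adj a b → a ∈ {v | κ v = 0} ∨ b ∈ {v | κ v = 0}) ∧
    (∀ a ∈ {v | κ v = 0}, ∀ b ∈ {v | κ v = 0}, ¬ S.pos.Adj a b ∧ ¬ S.neg.Adj a b) := by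
  constructor
  · intro a b hab
    have hne := hκ.2.1 a b hab
    have ha3 := (mem_scs3 (κ a)).1 (hκ.1 a)
    have hb3 := (mem_scs3 (κ b)).1 (hκ.1 b)
    have ha := hmiss a
    have hb := hmiss b
    simp only [Set.mem_setOf_eq]
    omega
  · intro a ha b hb
    simp only [Set.mem_setOf_eq] at ha hb
    constructor
    · intro hadj
      exact hκ.2.1 a b hadj (by rw [ha, hb])
    · intro hadj
      exact hκ.2.2 a b hadj (by rw [ha, hb]; ring)

end Aux

/-- For a 3-chromatic signed simple graph, `M(Σ) = 1` iff there is a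
vertex cover of the positive edges that is stable in `Σ`. -/
theorem maxdef_one_iff_stable_cover {V : Type*} [Fintype V] (S : SignedGraph V)
    (h : sChromaticNumber S = 3) :
    maxDef S = 1 ↔
      ∃ C : Set V,
        (∀ a b, S.pos.Adj a b → a ∈ C ∨ b ∈ C) ∧
        (∀ a ∈ C, ∀ b ∈ C, ¬ S.pos.Adj a b ∧ ¬ S.neg.Adj a b) := by
  
  have hex := exists_proper3 S h
  have hDset : ∀ d ∈ {d : ℕ | ∃ κ : V → ℤ, IsMinimalColoration S κ ∧
      sDeficiency (sChromaticNumber S) κ = d}, d ≤ 1 := by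
    rintro d ⟨κ, hmin, hdef⟩
    rw [IsMinimalColoration, h] at hmin
    rw [h] at hdef
    exact hdef ▸ def_le_one S h hmin
  constructor
  · -- maxDef = 1 → stable cover
    intro hM
    have hne : {d : ℕ | ∃ κ : V → ℤ, IsMinimalColoration S κ ∧
        sDeficiency (sChromaticNumber S) κ = d}.Nonempty := by
      obtain ⟨κ, hκ⟩ := hex
      exact ⟨sDeficiency (sChromaticNumber S) κ, κ, by rw [IsMinimalColoration, h]; exact hκ, rfl⟩
    have hbdd : BddAbove {d : ℕ | ∃ κ : V → ℤ, IsMinimalColoration S κ ∧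
        sDeficiency (sChromaticNumber S) κ = d} := ⟨1, fun d hd => hDset d hd⟩
    have hmem := Nat.sSup_mem hne hbdd
    rw [show sSup {d : ℕ | ∃ κ : V → ℤ, IsMinimalColoration S κ ∧
      sDeficiency (sChromaticNumber S) κ = d} = maxDef S from rfl, hM] at hmem
    obtain ⟨κ, hmin, hdef⟩ := hmem
    rw [IsMinimalColoration, h] at hmin
    rw [h] at hdef
    -- the missing color
    have hpos : (signedColorSet 3 \ Finset.image κ Finset.univ).Nonempty := by
      rw [sDeficiency] at hdef
      rw [← Finset.card_pos]
      omega
    obtain ⟨x, hx⟩ := hpos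
    rw [Finset.mem_sdiff, Finset.mem_image] at hx
    push_neg at hx
    have hx3 := (mem_scs3 x).1 hx.1
    obtain ⟨v0, hv0⟩ := zero_mem S h hmin
    have hx0 : x ≠ 0 := fun h' => hx.2 v0 (Finset.mem_univ v0) (h' ▸ hv0)
    have hs : x = 1 ∨ x = -1 := by omega
    have hmiss : ∀ v, κ v ≠ x := fun v => hx.2 v (Finset.mem_univ v)
    obtain ⟨hcov, hstab⟩ := cover_of_missing S hmin hs hmiss
    exact ⟨{v | κ v = 0}, hcov, hstab⟩
  · -- stable cover → maxDef = 1
    rintro ⟨C, hcov, hstab⟩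
    classical
    set κ : V → ℤ := fun v => if v ∈ C then 0 else 1 with hκdef
    have hκprop : IsProperColoration S 3 κ := by
      refine ⟨fun v => ?_, fun a b hab => ?_, fun a b hab => ?_⟩
      · rw [mem_scs3, hκdef]; by_cases hv : v ∈ C <;> simp [hv]
      · have hor := hcov a b hab
        have hnand : ¬ (a ∈ C ∧ b ∈ C) := fun ⟨ha, hb⟩ => (hstab a ha b hb).1 hab
        rw [hκdef]
        rcases hor with ha | hb
        · have hb : b ∉ C := fun hb => hnand ⟨ha, hb⟩
          simp [ha, hb]
        · have ha : a ∉ C := fun ha => hnand ⟨ha, hb⟩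
          simp [ha, hb]
      · have hnand : ¬ (a ∈ C ∧ b ∈ C) := fun ⟨ha, hb⟩ => (hstab a ha b hb).2 hab
        rw [hκdef]
        by_cases ha : a ∈ C
        · by_cases hb : b ∈ C
          · exact absurd ⟨ha, hb⟩ hnand
          · simp [ha, hb]
        · by_cases hb : b ∈ C <;> simp [ha, hb]
    -- C is nonempty: otherwise κ ≡ 1 is proper of size 2
    have hCne : ∃ v, v ∈ C := by
      by_contra hc
      push_neg at hc
      have h2 : IsProperColoration S 2 κ := by
        refine proper_mono S hκprop (fun v => ?_)
        rw [mem_scs2, hκdef]; simp [hc v]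
      have := chrom_le S h2
      omega
    -- C is not everything: otherwise κ ≡ 0 is proper of size 1
    have hCnu : ∃ v, v ∉ C := by
      by_contra hc
      push_neg at hc
      have h1 : IsProperColoration S 1 κ := by
        refine proper_mono S hκprop (fun v => ?_)
        rw [mem_scs1, hκdef]; simp [hc v]
      have := chrom_le S h1
      omega
    obtain ⟨v0, hv0⟩ := hCne
    obtain ⟨v1, hv1⟩ := hCnu
    have hdef1 : sDeficiency 3 κ = 1 := by
      rw [sDeficiency]
      have : signedColorSet 3 \ Finset.image κ Finset.univ = {(-1 : ℤ)} := by
        ext x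
        rw [Finset.mem_sdiff, Finset.mem_image, Finset.mem_singleton, mem_scs3]
        constructor
        · rintro ⟨hx3, hnimg⟩
          rcases hx3 with h' | h' | h'
          · exact h'
          · exact absurd ⟨v0, Finset.mem_univ v0, by rw [hκdef]; simp [hv0, h']⟩ hnimg
          · exact absurd ⟨v1, Finset.mem_univ v1, by rw [hκdef]; simp [hv1, h']⟩ hnimg
        · rintro rfl
          refine ⟨Or.inl rfl, ?_⟩
          rintro ⟨v, -, hv⟩
          rw [hκdef] at hv
          by_cases hvC : v ∈ C <;> simp [hvC] at hv
      rw [this, Finset.card_singleton]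
    have hmem : 1 ∈ {d : ℕ | ∃ κ : V → ℤ, IsMinimalColoration S κ ∧
        sDeficiency (sChromaticNumber S) κ = d} :=
      ⟨κ, by rw [IsMinimalColoration, h]; exact hκprop, by rw [h]; exact hdef1⟩
    have hbdd : BddAbove {d : ℕ | ∃ κ : V → ℤ, IsMinimalColoration S κ ∧
        sDeficiency (sChromaticNumber S) κ = d} := ⟨1, fun d hd => hDset d hd⟩
    exact le_antisymm (csSup_le ⟨1, hmem⟩ (fun d hd => hDset d hd)) (le_csSup hbdd hmem)
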